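/- Define T(t,m) for 0 ≤ t ≤ W and 0 ≤ m ≤ M by the backward recurrence T(t,m) = (2m/(N-t))·T(t+1, m-1) + ((N-t-m-M)/(N-t))·T(t+1, m) with base case T(W, m) = 1 for all m. Then T(0, M) = Σ_{i=0}^{W} C(W, i) · V_{M-i}, where V_m = [(2M)(2M-2)···(2m+2)] · [(N-2M)(N-2M-1)···(N-M-m-W+1)] / [N(N-1)···(N-W+1)]. -/

import Mathlib

/-- `Trec N W M t m` is the probability `T(t,m)` of a future collision in the prefix
process: `T(t,m) = (2m/(N-t))·T(t+1,m-1) + ((N-t-m-M)/(N-t))·T(t+1,m)` with base case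
`T(W,m) = 1`. -/
noncomputable def Trec (N W M : ℕ) : ℕ → ℕ → ℝ
  | t, m =>
    if _ : t < W then
      (2 * (m : ℝ) / ((N : ℝ) - t)) * Trec N W M (t + 1) (m - 1) +
        (((N : ℝ) - t - m - M) / ((N : ℝ) - t)) * Trec N W M (t + 1) m
    else 1
  termination_by t _ => W - t
  decreasing_by all_goals omega

/-- `Vval N W M m` is the common value `V_m` of all expansion terms with `M - m`
step-down transitions:
`V_m = [(2M)(2M-2)···(2m+2)] · [(N-2M)(N-2M-1)···(N-M-m-W+1)] / [N(N-1)···(N-W+1)]`. -/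
noncomputable def Vval (N W M m : ℕ) : ℝ :=
  ((∏ j ∈ Finset.range (M - m), ((2 * M : ℝ) - 2 * j)) *
      ∏ j ∈ Finset.range (W - (M - m)), ((N : ℝ) - 2 * M - j)) /
    ∏ j ∈ Finset.range W, ((N : ℝ) - j)

lemma pascal_sum (A B : ℕ → ℝ) (k : ℕ) :
    ∑ i ∈ Finset.range (k + 2), (((k+1).choose i : ℕ) : ℝ) * (A i * B (k + 1 - i)) =
      (∑ i ∈ Finset.range (k + 1), ((k.choose i : ℕ) : ℝ) * (A (i+1) * B (k - i))) +
      ∑ i ∈ Finset.range (k + 1), ((k.choose i : ℕ) : ℝ) * (A i * B (k - i + 1)) := by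
  have h0 : ∑ i ∈ Finset.range (k + 1), ((k.choose i : ℕ) : ℝ) * (A i * B (k - i + 1))
      = (∑ i ∈ Finset.range k, ((k.choose (i+1) : ℕ) : ℝ) * (A (i+1) * B (k - i))) + A 0 * B (k+1) := by
    rw [Finset.sum_range_succ']
    congr 1
    · apply Finset.sum_congr rfl
      intro i hi
      simp only [Finset.mem_range] at hi
      have : k - (i+1) + 1 = k - i := by omega
      rw [this]
    · simp
  have h1 : (∑ i ∈ Finset.range k, ((k.choose (i+1) : ℕ) : ℝ) * (A (i+1) * B (k - i)))
      = ∑ i ∈ Finset.range (k+1), ((k.choose (i+1) : ℕ) : ℝ) * (A (i+1) * B (k - i)) := by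
    rw [Finset.sum_range_succ, Nat.choose_succ_self]
    simp
  rw [Finset.sum_range_succ']
  have h2 : ∀ i ∈ Finset.range (k+1), (((k+1).choose (i+1) : ℕ) : ℝ) * (A (i+1) * B (k + 1 - (i+1)))
      = ((k.choose i : ℕ) : ℝ) * (A (i+1) * B (k - i)) + ((k.choose (i+1) : ℕ) : ℝ) * (A (i+1) * B (k - i)) := by
    intro i hi
    have e : k + 1 - (i+1) = k - i := by omega
    rw [e, Nat.choose_succ_succ]
    push_cast
    ring
  rw [Finset.sum_congr rfl h2, Finset.sum_add_distrib, h0, h1]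
  simp [Nat.choose_succ_succ]
  ring

lemma step_core (x y d D : ℝ) (k : ℕ) (A B A' B' : ℕ → ℝ)
    (hA : ∀ i, x * A' i = A (i+1)) (hB : ∀ s, y * B' s = B (s+1)) (hd : d ≠ 0) (hD : D ≠ 0) :
    x / d * ((∑ i ∈ Finset.range (k+1), ((k.choose i : ℕ) : ℝ) * (A' i * B (k - i))) / D) +
      y / d * ((∑ i ∈ Finset.range (k+1), ((k.choose i : ℕ) : ℝ) * (A i * B' (k - i))) / D) =
    (∑ i ∈ Finset.range (k+2), (((k+1).choose i : ℕ) : ℝ) * (A i * B (k+1-i))) / (d * D) := by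
  have e1 : x * (∑ i ∈ Finset.range (k+1), ((k.choose i : ℕ) : ℝ) * (A' i * B (k - i)))
      = ∑ i ∈ Finset.range (k+1), ((k.choose i : ℕ) : ℝ) * (A (i+1) * B (k - i)) := by
    rw [Finset.mul_sum]
    apply Finset.sum_congr rfl
    intro i _
    rw [← hA i]; ring
  have e2 : y * (∑ i ∈ Finset.range (k+1), ((k.choose i : ℕ) : ℝ) * (A i * B' (k - i)))
      = ∑ i ∈ Finset.range (k+1), ((k.choose i : ℕ) : ℝ) * (A i * B (k - i + 1)) := by
    rw [Finset.mul_sum]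
    apply Finset.sum_congr rfl
    intro i _
    rw [← hB (k - i)]; ring
  rw [pascal_sum, ← e1, ← e2]
  field_simp

set_option maxHeartbeats 2000000 in
lemma Trec_formula (N W M : ℕ) (hWM : W ≤ M) (hNM : 2 * M + W ≤ N) :
    ∀ k t m, W - t = k → t ≤ W → M ≤ t + m → m ≤ M →
    Trec N W M t m =
      (∑ i ∈ Finset.range (W - t + 1), (((W - t).choose i : ℕ) : ℝ) *
        ((∏ j ∈ Finset.range i, (2 * (m:ℝ) - 2 * j)) *
          ∏ j ∈ Finset.range (W - t - i), ((N:ℝ) - M - t - m - j))) /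
      ∏ j ∈ Finset.range (W - t), ((N:ℝ) - t - j) := by
  intro k
  induction k with
  | zero =>
    intro t m hk ht hm1 hm2
    rw [Trec, dif_neg (by omega)]
    simp [hk]
  | succ k ih =>
    intro t m hk ht hm1 hm2
    have htW : t < W := by omega
    have hm : 1 ≤ m := by omega
    rw [Trec, dif_pos htW,
        ih (t+1) (m-1) (by omega) (by omega) (by omega) (by omega),
        ih (t+1) m (by omega) (by omega) (by omega) (by omega)]
    rw [show W - (t+1) = k from by omega, show W - t = k + 1 from by omega]
    push_cast [Nat.cast_sub hm]
    have hBfix : ∀ s : ℕ, (∏ x ∈ Finset.range s, ((N:ℝ) - ↑M - (↑t + 1) - (↑m - 1) - ↑x))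
        = ∏ j ∈ Finset.range s, ((N:ℝ) - ↑M - ↑t - ↑m - ↑j) := by
      intro s
      exact Finset.prod_congr rfl (fun j _ => by ring)
    simp only [hBfix]
    have hDfix : (∏ j ∈ Finset.range (k+1), ((N:ℝ) - ↑t - ↑j))
        = ((N:ℝ) - ↑t) * ∏ x ∈ Finset.range k, ((N:ℝ) - (↑t + 1) - ↑x) := by
      rw [Finset.prod_range_succ', mul_comm]
      congr 1
      · norm_num
      · exact Finset.prod_congr rfl (fun j _ => by push_cast; ring)
    rw [hDfix]
    have hd : ((N:ℝ) - ↑t) ≠ 0 := by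
      have : (t:ℝ) < N := by exact_mod_cast (by omega : t < N)
      linarith
    have hD : (∏ x ∈ Finset.range k, ((N:ℝ) - (↑t + 1) - ↑x)) ≠ 0 := by
      apply Finset.prod_ne_zero_iff.mpr
      intro x hx
      simp only [Finset.mem_range] at hx
      have : ((t:ℝ) + 1 + x) < N := by exact_mod_cast (by omega : t + 1 + x < N)
      intro h; linarith
    have hA : ∀ i : ℕ, (2 * (m:ℝ)) * (∏ j ∈ Finset.range i, (2 * ((m:ℝ) - 1) - 2 * ↑j))
        = ∏ j ∈ Finset.range (i+1), (2 * (m:ℝ) - 2 * ↑j) := by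
      intro i
      rw [Finset.prod_range_succ', mul_comm]
      congr 1
      · exact Finset.prod_congr rfl (fun j _ => by push_cast; ring)
      · push_cast; ring
    have hB : ∀ s : ℕ, (((N:ℝ) - ↑t - ↑m - ↑M)) * (∏ j ∈ Finset.range s, ((N:ℝ) - ↑M - (↑t + 1) - ↑m - ↑j))
        = ∏ j ∈ Finset.range (s+1), ((N:ℝ) - ↑M - ↑t - ↑m - ↑j) := by
      intro s
      rw [Finset.prod_range_succ', mul_comm]
      congr 1
      · exact Finset.prod_congr rfl (fun j _ => by push_cast; ring)
      · push_cast; ring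
    have key := step_core (2 * (m:ℝ)) ((N:ℝ) - ↑t - ↑m - ↑M) ((N:ℝ) - ↑t)
      (∏ x ∈ Finset.range k, ((N:ℝ) - (↑t + 1) - ↑x)) k
      (fun i => ∏ j ∈ Finset.range i, (2 * (m:ℝ) - 2 * ↑j))
      (fun s => ∏ j ∈ Finset.range s, ((N:ℝ) - ↑M - ↑t - ↑m - ↑j))
      (fun i => ∏ j ∈ Finset.range i, (2 * ((m:ℝ) - 1) - 2 * ↑j))
      (fun s => ∏ j ∈ Finset.range s, ((N:ℝ) - ↑M - (↑t + 1) - ↑m - ↑j))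
      hA hB hd hD
    beta_reduce at key
    convert key using 2


/-- Expanding the recurrence `T(t,m)`, all monomials with the same number `M - m` of
step-down transitions have the same value `V_m`, and there are `C(W, M-m)` of them; hence
`T(0,M) = ∑_{i=0}^{W} C(W,i) · V_{M-i}`. -/
theorem Trec_zero_eq_sum (N W M : ℕ) (hN : 0 < N) (hW : 0 < W) (hM : 0 < M)
    (hWM : W ≤ M) (hNM : 2 * M + W ≤ N) :
    Trec N W M 0 M = ∑ i ∈ Finset.range (W + 1), (W.choose i : ℝ) * Vval N W M (M - i) := by
  rw [Trec_formula N W M hWM hNM (W - 0) 0 M rfl (by omega) (by omega) (by omega)]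
  rw [Finset.sum_div]
  apply Finset.sum_congr (by norm_num)
  intro i hi
  simp only [Finset.mem_range, Nat.sub_zero] at hi ⊢
  unfold Vval
  rw [show M - (M - i) = i from by omega]
  push_cast
  ring_nf
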